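/- For all real numbers f, g, μ, R, S, a, b, c, the following algebraic identity holds: R·a·[ (R f³/3)·a + Sμ(f³/3 + f²g/2)·b − μ(f²/2)·c ] + Sμ·b·[ (R f³/3)·a + Sμ(f³/3 + f²g/2)·b − μ(f²/2)·c + (R f²g/2)·a + S(g³/3 + μ(f²g/2 + f g²))·b − (μ f g + g²/2)·c ] − μ·c·[ (R f²/2)·a + S(g²/2 + μ(f²/2 + f g))·b − (μ f + g)·c ] = f·( f·(R a + S μ b)/√3 + (√3/2)·μ·(S g b − c) )² + (μ²/4)·f·(S g b − c)² + g μ·( (S/√3)·g·b − (√3/2)·c )² + (g μ/4)·c². In particular, if f ≥ 0, g ≥ 0 and μ ≥ 0, the left-hand side is nonnegative. -/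

import Mathlib

lemma sos_eq_aux (f g μ R S a b c : ℝ) :
    R * a * (R * f ^ 3 / 3 * a + S * μ * (f ^ 3 / 3 + f ^ 2 * g / 2) * b
        - μ * (f ^ 2 / 2) * c)
      + S * μ * b * (R * f ^ 3 / 3 * a + S * μ * (f ^ 3 / 3 + f ^ 2 * g / 2) * b
        - μ * (f ^ 2 / 2) * c
        + R * f ^ 2 * g / 2 * a + S * (g ^ 3 / 3 + μ * (f ^ 2 * g / 2 + f * g ^ 2)) * b
        - (μ * f * g + g ^ 2 / 2) * c)
      - μ * c * (R * f ^ 2 / 2 * a + S * (g ^ 2 / 2 + μ * (f ^ 2 / 2 + f * g)) * b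
        - (μ * f + g) * c)
    = f * (f * (R * a + S * μ * b) / Real.sqrt 3
          + Real.sqrt 3 / 2 * μ * (S * g * b - c)) ^ 2
      + μ ^ 2 / 4 * f * (S * g * b - c) ^ 2
      + g * μ * (S / Real.sqrt 3 * g * b - Real.sqrt 3 / 2 * c) ^ 2
      + g * μ / 4 * c ^ 2 := by
  have h3 : Real.sqrt 3 ^ 2 = 3 := Real.sq_sqrt (by norm_num)
  have h3ne : Real.sqrt 3 ≠ 0 := by positivity
  have h4 : Real.sqrt 3 ^ 4 = 9 := by rw [show (4:ℕ)=2*2 from rfl, pow_mul, h3]; norm_num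
  have h6 : Real.sqrt 3 ^ 6 = 27 := by rw [show (6:ℕ)=2*3 from rfl, pow_mul, h3]; norm_num
  field_simp
  ring_nf
  rw [h3, h4]
  ring

/-- Pointwise sum-of-squares identity underlying the dissipation of the energy
functional for the two-phase thin film system with insoluble surfactant
(Lemma 2.1 of the paper). Here `a` stands for `∂ₓᵏf`, `b` for `∂ₓᵏ(f+g)`,
`c` for `∂ₓσ(Γ)`, `R`, `S` for the constants `Rₖ`, `Sₖ`, and `μ` for the
viscosity ratio. In particular, if `f ≥ 0`, `g ≥ 0`, `μ ≥ 0`, the left-hand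
side is nonnegative. -/
theorem energy_dissipation_sos_identity (f g μ R S a b c : ℝ) :
    (R * a * (R * f ^ 3 / 3 * a + S * μ * (f ^ 3 / 3 + f ^ 2 * g / 2) * b
        - μ * (f ^ 2 / 2) * c)
      + S * μ * b * (R * f ^ 3 / 3 * a + S * μ * (f ^ 3 / 3 + f ^ 2 * g / 2) * b
        - μ * (f ^ 2 / 2) * c
        + R * f ^ 2 * g / 2 * a + S * (g ^ 3 / 3 + μ * (f ^ 2 * g / 2 + f * g ^ 2)) * b
        - (μ * f * g + g ^ 2 / 2) * c)
      - μ * c * (R * f ^ 2 / 2 * a + S * (g ^ 2 / 2 + μ * (f ^ 2 / 2 + f * g)) * b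
        - (μ * f + g) * c)
    = f * (f * (R * a + S * μ * b) / Real.sqrt 3
          + Real.sqrt 3 / 2 * μ * (S * g * b - c)) ^ 2
      + μ ^ 2 / 4 * f * (S * g * b - c) ^ 2
      + g * μ * (S / Real.sqrt 3 * g * b - Real.sqrt 3 / 2 * c) ^ 2
      + g * μ / 4 * c ^ 2)
    ∧ (0 ≤ f → 0 ≤ g → 0 ≤ μ →
      0 ≤ R * a * (R * f ^ 3 / 3 * a + S * μ * (f ^ 3 / 3 + f ^ 2 * g / 2) * b
          - μ * (f ^ 2 / 2) * c)
        + S * μ * b * (R * f ^ 3 / 3 * a + S * μ * (f ^ 3 / 3 + f ^ 2 * g / 2) * b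
          - μ * (f ^ 2 / 2) * c
          + R * f ^ 2 * g / 2 * a + S * (g ^ 3 / 3 + μ * (f ^ 2 * g / 2 + f * g ^ 2)) * b
          - (μ * f * g + g ^ 2 / 2) * c)
        - μ * c * (R * f ^ 2 / 2 * a + S * (g ^ 2 / 2 + μ * (f ^ 2 / 2 + f * g)) * b
          - (μ * f + g) * c)) := by
  refine ⟨sos_eq_aux f g μ R S a b c, fun hf hg hμ => ?_⟩
  rw [sos_eq_aux f g μ R S a b c]
  positivity
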